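/- arXiv:2011.01778 — 5 statements merged into one kernel-verified Lean document; each statement's English description precedes it below -/
import Mathlib

section
/- There exists an HGCRP instance with two agents that admits no Nash stable partition: with N = {1,2} and utilities U({1}) = 1, U({1,2}) = 2, U({2}) = 3, every partition of N admits a beneficial individual deviation (an agent i moving to an existing coalition C, possibly the empty coalition, with U(C ∪ {i}) > U(π(i))). -/
open Finset

/-- `P` maps each agent to its coalition in a partition: each agent belongs to its
own coalition, and agents in the same coalition have the same coalition. -/
def IsPartitionMap {N : Type*} (P : N → Finset N) : Prop :=
  (∀ i, i ∈ P i) ∧ (∀ i j, j ∈ P i → P j = P i)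

private lemma hne1 : ({0, 1} : Finset (Fin 2)) ≠ {0} := by decide
private lemma hne2 : ({1} : Finset (Fin 2)) ≠ {0} := by decide
private lemma hne3 : ({1} : Finset (Fin 2)) ≠ {0, 1} := by decide
private lemma hne4 : (∅ : Finset (Fin 2)) ≠ {0, 1} := by decide

/-- there is a two-agent HGCRP instance (with `U({1})=1`, `U({1,2})=2`,
`U({2})=3`) admitting no Nash stable partition: in every partition some agent can
strictly benefit by moving to an existing coalition or to the empty coalition. -/
theorem exists_HGCRP_no_nash_stable :
    ∃ U : Finset (Fin 2) → ℝ,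
      U {0} = 1 ∧ U {0, 1} = 2 ∧ U {1} = 3 ∧
      ∀ P : Fin 2 → Finset (Fin 2), IsPartitionMap P →
        ∃ (i : Fin 2) (C : Finset (Fin 2)),
          (C = ∅ ∨ ∃ j, C = P j) ∧ C ≠ P i ∧ U (insert i C) > U (P i) := by
  refine ⟨fun S => if S = {0} then 1 else if S = {0, 1} then 2 else if S = {1} then 3 else 0,
    by simp [hne1, hne2, hne3], by simp [hne1, hne2, hne3], by simp [hne1, hne2, hne3], ?_⟩
  intro P hP
  by_cases h : (1 : Fin 2) ∈ P 0
  · have h0 : P 0 = {0, 1} := by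
      ext x; fin_cases x <;> simp [hP.1 0, h]
    have h1 : P 1 = {0, 1} := by rw [hP.2 0 1 h, h0]
    refine ⟨1, ∅, Or.inl rfl, by simp [h1, hne4], ?_⟩
    simp [h1, hne1, hne2, hne3]
    norm_num
  · have h0 : P 0 = {0} := by
      ext x; fin_cases x <;> simp [hP.1 0, h]
    have h0' : (0 : Fin 2) ∉ P 1 := by
      intro hm
      exact h ((hP.2 1 0 hm) ▸ hP.1 1)
    have h1 : P 1 = {1} := by
      ext x; fin_cases x <;> simp [hP.1 1, h0']
    refine ⟨0, P 1, Or.inr ⟨1, rfl⟩, by simp [h0, h1], ?_⟩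
    rw [h0, h1]
    norm_num [hne1, hne2, hne3]
end

section
/- Let ψ(π) denote the multiset of agent utilities of partition π sorted in non-increasing order, compared lexicographically. If a coalition C blocks π (i.e., U(C) > U(π(i)) for all i ∈ C), then ψ(π_C) is lexicographically strictly greater than ψ(π), where π_C is the partition obtained from π by the agents in C deviating to form C. -/
open Finset

/-- `ψ(π)`: the sequence of all agents' utilities sorted in non-increasing order. -/
noncomputable def psi {N : Type*} [Fintype N] (U : Finset N → ℝ) (P : N → Finset N) :
    List ℝ :=
  (Finset.univ.toList.map fun i => U (P i)).insertionSort (fun a b => b ≤ a)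

/-- The partition `π_C` induced on `π` by the deviating coalition `C`. -/
def deviate {N : Type*} [DecidableEq N] (P : N → Finset N) (C : Finset N) :
    N → Finset N :=
  fun i => if i ∈ C then C else P i \ C

/-- Key list lemma: if `a, b` are sorted in non-increasing order, have equal length,
and the elements `≥ t` of `a` form a strictly smaller sub-multiset of those of `b`,
then `a <lex b`. -/
lemma lex_of_filter_lt (t : ℝ) : ∀ (a b : List ℝ),
    a.Pairwise (fun p q => q ≤ p) → b.Pairwise (fun p q => q ≤ p) →
    a.length = b.length →
    (↑a : Multiset ℝ).filter (t ≤ ·) ≤ (↑b : Multiset ℝ).filter (t ≤ ·) →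
    ((↑a : Multiset ℝ).filter (t ≤ ·)).card < ((↑b : Multiset ℝ).filter (t ≤ ·)).card →
    List.Lex (· < ·) a b := by
  intro a
  induction a with
  | nil =>
    intro b _ _ hlen _ hcard
    have hb : b = [] := by cases b <;> simp_all
    subst hb; simp at hcard
  | cons x a' ih =>
    intro b ha hb hlen hle hcard
    cases b with
    | nil => simp at hlen
    | cons y b' =>
      rcases lt_trichotomy x y with h | h | h
      · exact List.Lex.rel h
      · subst h
        apply List.Lex.cons
        have ha' := ha.of_cons
        have hb' := hb.of_cons
        have hlen' : a'.length = b'.length := by simpa using hlen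
        have hcoe1 : ((x :: a' : List ℝ) : Multiset ℝ) = x ::ₘ (↑a' : Multiset ℝ) := rfl
        have hcoe2 : ((x :: b' : List ℝ) : Multiset ℝ) = x ::ₘ (↑b' : Multiset ℝ) := rfl
        by_cases hx : t ≤ x
        · rw [hcoe1, hcoe2, Multiset.filter_cons_of_pos _ hx,
            Multiset.filter_cons_of_pos _ hx] at hle hcard
          exact ih b' ha' hb' hlen' ((Multiset.cons_le_cons_iff x).mp hle)
            (by simpa using hcard)
        · rw [hcoe1, hcoe2, Multiset.filter_cons_of_neg _ hx,
            Multiset.filter_cons_of_neg _ hx] at hle hcard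
          exact ih b' ha' hb' hlen' hle hcard
      · exfalso
        by_cases hx : t ≤ x
        · have hxmem : x ∈ ((x :: a' : List ℝ) : Multiset ℝ).filter (t ≤ ·) := by
            simp [hx]
          have hxmem' := Multiset.mem_of_le hle hxmem
          have hxb : x ∈ (y :: b' : List ℝ) := by
            simpa using (Multiset.mem_filter.mp hxmem').1
          rcases List.mem_cons.mp hxb with rfl | hmem
          · exact absurd h (lt_irrefl _)
          · have := List.rel_of_pairwise_cons hb hmem
            exact absurd (lt_of_lt_of_le h this) (lt_irrefl _)
        · push_neg at hx
          have h1 : ((x :: a' : List ℝ) : Multiset ℝ).filter (t ≤ ·) = 0 := by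
            rw [Multiset.filter_eq_nil]
            intro v hv
            rcases (by simpa using hv : v = x ∨ v ∈ a') with rfl | hv'
            · exact not_le.mpr hx
            · exact not_le.mpr (lt_of_le_of_lt (List.rel_of_pairwise_cons ha hv') hx)
          have h2 : ((y :: b' : List ℝ) : Multiset ℝ).filter (t ≤ ·) = 0 := by
            rw [Multiset.filter_eq_nil]
            intro v hv
            rcases (by simpa using hv : v = y ∨ v ∈ b') with rfl | hv'
            · exact not_le.mpr (lt_trans h hx)
            · exact not_le.mpr (lt_of_le_of_lt (List.rel_of_pairwise_cons hb hv')
                (lt_trans h hx))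
          rw [h1, h2] at hcard
          simp at hcard

/-- if a coalition `C` blocks `π`, then `ψ(π_C)` is lexicographically
strictly greater than `ψ(π)`. -/
theorem psi_lt_of_blocking {N : Type*} [DecidableEq N] [Fintype N]
    (U : Finset N → ℝ) (P : N → Finset N) (hP : IsPartitionMap P)
    (C : Finset N) (hC : C.Nonempty) (hblock : ∀ i ∈ C, U (P i) < U C) :
    List.Lex (· < ·) (psi U P) (psi U (deviate P C)) := by
  classical
  set t := U C with ht
  obtain ⟨i0, hi0⟩ := hC
  have hpt : ∀ i : N, t ≤ U (P i) → deviate P C i = P i := by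
    intro i hi
    have hiC : i ∉ C := fun hmem => absurd (hblock i hmem) (not_lt.mpr hi)
    have hdisj : Disjoint (P i) C := by
      rw [Finset.disjoint_left]
      intro j hjP hjC
      have hPj : P j = P i := hP.2 i j hjP
      exact absurd (hblock j hjC) (not_lt.mpr (hPj ▸ hi))
    simp [deviate, hiC, Finset.sdiff_eq_self_of_disjoint hdisj]
  set f : N → ℝ := fun i => U (P i) with hf
  set g : N → ℝ := fun i => U (deviate P C i) with hg
  set M : Multiset N := (Finset.univ : Finset N).val with hM
  have himp : ∀ i, t ≤ f i → t ≤ g i := fun i hi => by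
    rw [hg]; simp only []; rw [hpt i hi]; exact hi
  have hSle : M.filter (fun i => t ≤ f i) ≤ M.filter (fun i => t ≤ g i) :=
    M.monotone_filter_right (fun i hi => himp i hi)
  have hgf : ∀ i ∈ M.filter (fun i => t ≤ f i), g i = f i := by
    intro i hi
    have := (Multiset.mem_filter.mp hi).2
    rw [hg]; simp only []; rw [hpt i this]
  have hmaple : (M.map f).filter (t ≤ ·) ≤ (M.map g).filter (t ≤ ·) := by
    rw [Multiset.filter_map, Multiset.filter_map]
    calc Multiset.map f (M.filter ((t ≤ ·) ∘ f))
        = Multiset.map g (M.filter ((t ≤ ·) ∘ f)) := (Multiset.map_congr rfl hgf).symm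
      _ ≤ Multiset.map g (M.filter ((t ≤ ·) ∘ g)) := Multiset.map_le_map hSle
  have hi0M : i0 ∈ M := Finset.mem_univ i0
  have hgi0 : g i0 = t := by rw [hg]; simp [deviate, hi0, ht]
  have hfi0 : ¬ t ≤ f i0 := not_le.mpr (hblock i0 hi0)
  have hSlt : M.filter (fun i => t ≤ f i) < M.filter (fun i => t ≤ g i) := by
    refine lt_of_le_of_ne hSle (fun he => ?_)
    have : i0 ∈ M.filter (fun i => t ≤ g i) :=
      Multiset.mem_filter.mpr ⟨hi0M, le_of_eq hgi0.symm⟩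
    rw [← he] at this
    exact hfi0 (Multiset.mem_filter.mp this).2
  have hcard : ((M.map f).filter (t ≤ ·)).card < ((M.map g).filter (t ≤ ·)).card := by
    rw [Multiset.filter_map, Multiset.filter_map, Multiset.card_map, Multiset.card_map]
    exact Multiset.card_lt_card hSlt
  -- connect psi with the multisets above
  haveI : IsTotal ℝ (fun a b : ℝ => b ≤ a) := ⟨fun a b => le_total b a⟩
  haveI : IsTrans ℝ (fun a b : ℝ => b ≤ a) := ⟨fun _ _ _ h1 h2 => le_trans h2 h1⟩
  have hsortA : (psi U P).Pairwise (fun p q => q ≤ p) :=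
    List.pairwise_insertionSort _ _
  have hsortB : (psi U (deviate P C)).Pairwise (fun p q => q ≤ p) :=
    List.pairwise_insertionSort _ _
  have hcoeA : ((psi U P : List ℝ) : Multiset ℝ) = M.map f := by
    unfold psi
    rw [Multiset.coe_eq_coe.mpr (List.perm_insertionSort _ _), ← Multiset.map_coe,
      Finset.coe_toList]
  have hcoeB : ((psi U (deviate P C) : List ℝ) : Multiset ℝ) = M.map g := by
    unfold psi
    rw [Multiset.coe_eq_coe.mpr (List.perm_insertionSort _ _), ← Multiset.map_coe,
      Finset.coe_toList]
  have hlen : (psi U P).length = (psi U (deviate P C)).length := by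
    have h1 : (psi U P).length = ((psi U P : List ℝ) : Multiset ℝ).card := rfl
    have h2 : (psi U (deviate P C)).length
        = ((psi U (deviate P C) : List ℝ) : Multiset ℝ).card := rfl
    rw [h1, h2, hcoeA, hcoeB, Multiset.card_map, Multiset.card_map]
  exact lex_of_filter_lt t _ _ hsortA hsortB hlen
    (by rw [hcoeA, hcoeB]; exact hmaple)
    (by rw [hcoeA, hcoeB]; exact hcard)
end

section
/- In a monotone submodular HGCRP instance, if in partition π some agent i strictly benefits from moving to an existing coalition C ∈ π with |C| < κ (i.e., U(C ∪ {i}) > U(π(i))), then ψ(π_{C∪{i}}) is lexicographically strictly greater than ψ(π), where π_{C∪{i}} is the partition after the move and ψ sorts all agent utilities in non-increasing order. -/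
open Finset

/-- The partition resulting from agent `i` moving to coalition `C`. -/
def moveTo {N : Type*} [DecidableEq N] (P : N → Finset N) (i : N) (C : Finset N) :
    N → Finset N :=
  fun a => if a ∈ insert i C then insert i C else (P a).erase i

lemma countP_lt_of_witness {α : Type*} (p q : α → Bool) (l : List α)
    (h : ∀ x ∈ l, p x = true → q x = true) (x : α) (hx : x ∈ l)
    (hq : q x = true) (hp : p x = false) :
    l.countP p < l.countP q := by
  induction l with
  | nil => simp at hx
  | cons a l ih =>
    rw [List.countP_cons, List.countP_cons]
    rcases List.mem_cons.mp hx with rfl | hx'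
    · have hmono := List.countP_mono_left
        (l := l) (p := p) (q := q) (fun y hy => h y (List.mem_cons_of_mem _ hy))
      rw [if_pos hq, if_neg (by simp [hp])]
      omega
    · have hlt := ih (fun y hy => h y (List.mem_cons_of_mem _ hy)) hx'
      by_cases hpa : p a = true
      · have hqa := h a List.mem_cons_self hpa
        rw [if_pos hpa, if_pos hqa]; omega
      · rw [if_neg hpa]
        by_cases hqa : q a = true
        · rw [if_pos hqa]; omega
        · rw [if_neg hqa]; omega

lemma countP_zero_of_head_lt (t : ℝ) (b : ℝ) (B : List ℝ)
    (hB : (b :: B).Pairwise (fun a b : ℝ => b ≤ a)) (hbt : b < t) :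
    (b :: B).countP (fun x => decide (t ≤ x)) = 0 := by
  rw [List.countP_eq_zero]
  intro x hx
  rcases List.mem_cons.mp hx with rfl | hx'
  · simp; linarith
  · have := (List.pairwise_cons.mp hB).1 x hx'
    simp; linarith

lemma lex_of_countP (v : ℝ) (A B : List ℝ)
    (hA : A.Pairwise (fun a b : ℝ => b ≤ a)) (hB : B.Pairwise (fun a b : ℝ => b ≤ a))
    (H1 : ∀ t, v ≤ t → A.countP (fun x => decide (t ≤ x)) ≤ B.countP (fun x => decide (t ≤ x)))
    (H2 : A.countP (fun x => decide (v ≤ x)) < B.countP (fun x => decide (v ≤ x))) :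
    List.Lex (· < ·) A B := by
  induction A generalizing B with
  | nil =>
    cases B with
    | nil => simp at H2
    | cons b B => exact List.Lex.nil
  | cons a A ih =>
    cases B with
    | nil => simp at H2
    | cons b B =>
      rcases lt_trichotomy a b with h | h | h
      · exact List.Lex.rel h
      · subst h
        apply List.Lex.cons
        refine ih _ (List.pairwise_cons.mp hA).2 (List.pairwise_cons.mp hB).2 ?_ ?_
        · intro t ht
          have h := H1 t ht
          by_cases hta : t ≤ a <;>
            simpa [List.countP_cons, hta] using h
        · by_cases hva : v ≤ a <;>
            simpa [List.countP_cons, hva] using H2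
      · exfalso
        have hav : v ≤ a := by
          by_contra hav
          push_neg at hav
          rw [countP_zero_of_head_lt v a A hA hav] at H2
          have hbv : b < v := lt_trans h hav
          rw [countP_zero_of_head_lt v b B hB hbv] at H2
          exact absurd H2 (by omega)
        have h1 := H1 a hav
        rw [countP_zero_of_head_lt a b B hB h] at h1
        have : 1 ≤ (a :: A).countP (fun x => decide (a ≤ x)) := by
          rw [List.countP_cons]
          simp
        omega

/-- in a monotone submodular HGCRP instance, if agent `i` strictly
benefits from moving to an existing coalition `C ∈ π` with `|C| < κ`, then
`ψ(π_{C ∪ {i}})` is lexicographically strictly greater than `ψ(π)`. -/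
theorem psi_lt_of_beneficial_move {N : Type*} [DecidableEq N] [Fintype N]
    (U : Finset N → ℝ) (κ : ℕ)
    (hmono : ∀ X Y : Finset N, X ⊆ Y → U X ≤ U Y)
    (hsub : ∀ (X Y : Finset N) (x : N), X ⊆ Y → x ∉ Y →
      U (insert x Y) - U Y ≤ U (insert x X) - U X)
    (hempty : U ∅ = 0)
    (P : N → Finset N) (hP : IsPartitionMap P)
    (i : N) (C : Finset N) (hCmem : ∃ j, C = P j) (hiC : i ∉ C)
    (hcard : C.card < κ) (hben : U (P i) < U (insert i C)) :
    List.Lex (· < ·) (psi U P) (psi U (moveTo P i C)) := by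
  classical
  obtain ⟨hmem, hcoh⟩ := hP
  set Q := moveTo P i C with hQdef
  set v := U (insert i C) with hv
  haveI : IsTotal ℝ (fun a b : ℝ => b ≤ a) := ⟨fun a b => le_total b a⟩
  haveI : IsTrans ℝ (fun a b : ℝ => b ≤ a) := ⟨fun a b c h1 h2 => le_trans h2 h1⟩
  have key : ∀ (R : N → Finset N) (t : ℝ),
      (psi U R).countP (fun x => decide (t ≤ x)) =
        (Finset.univ.toList).countP (fun a => decide (t ≤ U (R a))) := by
    intro R t
    unfold psi
    rw [(List.perm_insertionSort _ _).countP_eq, List.countP_map]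
    rfl
  have hQC : ∀ a ∈ insert i C, Q a = insert i C := by
    intro a ha; simp [hQdef, moveTo, ha]
  have hQout : ∀ a, a ∉ insert i C → Q a = (P a).erase i := by
    intro a ha; simp [hQdef, moveTo, ha]
  -- pointwise implication
  have point : ∀ t, v ≤ t → ∀ a, t ≤ U (P a) → t ≤ U (Q a) := by
    intro t ht a hpa
    by_cases ha : a ∈ insert i C
    · rw [hQC a ha, ← hv]
      rcases Finset.mem_insert.mp ha with rfl | haC
      · linarith
      · obtain ⟨j, rfl⟩ := hCmem
        have hUC : U (P j) ≤ v := hmono _ _ (Finset.subset_insert _ _)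
        rw [hcoh j a haC] at hpa
        linarith
    · rw [hQout a ha]
      by_cases hia : i ∈ P a
      · have hPi : P i = P a := hcoh a i hia
        rw [← hPi] at hpa
        linarith
      · rw [Finset.erase_eq_of_notMem hia]
        exact hpa
  have hsortP : (psi U P).Pairwise (fun a b : ℝ => b ≤ a) := by
    unfold psi; exact List.pairwise_insertionSort _ _
  have hsortQ : (psi U Q).Pairwise (fun a b : ℝ => b ≤ a) := by
    unfold psi; exact List.pairwise_insertionSort _ _
  refine lex_of_countP v _ _ hsortP hsortQ ?_ ?_
  · intro t ht
    rw [key, key]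
    apply List.countP_mono_left
    intro a _ hpa
    simp only [decide_eq_true_eq] at hpa ⊢
    exact point t ht a hpa
  · rw [key, key]
    apply countP_lt_of_witness _ _ _ ?_ i ?_ ?_ ?_
    · intro a _ hpa
      simp only [decide_eq_true_eq] at hpa ⊢
      exact point v le_rfl a hpa
    · simp [Finset.mem_toList]
    · simp only [decide_eq_true_eq]
      rw [hQC i (Finset.mem_insert_self _ _)]
    · simp only [decide_eq_false_iff_not, decide_eq_true_eq, not_le]
      exact hben
end

section
/- Every monotone submodular HGCRP instance admits a partition (into coalitions of size at most κ) that is simultaneously Nash stable, core stable, and Pareto optimal; specifically, any partition maximizing the lexicographic potential ψ (the non-increasing sorted utility vector) among all feasible partitions has all three properties. -/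
open Finset

/-- A feasible partition: a partition map all of whose coalitions have size at most `κ`. -/
def Feasible {N : Type*} (κ : ℕ) (P : N → Finset N) : Prop :=
  IsPartitionMap P ∧ ∀ i, (P i).card ≤ κ

/-- Nash stability with a size bound `κ`: no agent benefits by moving to an existing
coalition of size `< κ`, nor by moving to a new empty coalition. -/
def NashStable {N : Type*} [DecidableEq N] (U : Finset N → ℝ) (κ : ℕ)
    (P : N → Finset N) : Prop :=
  (∀ i, U {i} ≤ U (P i)) ∧
  ∀ i C, (∃ j, C = P j) → C ≠ P i → C.card < κ → U (insert i C) ≤ U (P i)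

/-- Core stability with a size bound `κ`. -/
def CoreStable {N : Type*} (U : Finset N → ℝ) (κ : ℕ) (P : N → Finset N) : Prop :=
  ¬ ∃ C : Finset N, C.Nonempty ∧ C.card ≤ κ ∧ ∀ i ∈ C, U (P i) < U C

/-- Pareto optimality among feasible partitions. -/
def ParetoOptimal {N : Type*} (U : Finset N → ℝ) (κ : ℕ) (P : N → Finset N) : Prop :=
  ¬ ∃ P' : N → Finset N, Feasible κ P' ∧
      (∀ i, U (P i) ≤ U (P' i)) ∧ ∃ j, U (P j) < U (P' j)

/- ### Auxiliary lemmas -/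

lemma countP_toList_aux {N : Type*} (s : Finset N) (p : N → Prop) [DecidablePred p] :
    s.toList.countP (fun i => decide (p i)) = (s.filter p).card := by
  classical
  rw [← Multiset.coe_countP, Finset.coe_toList]
  simp [Finset.filter, Finset.card, Multiset.countP_eq_card_filter]

lemma countA_aux (l : List ℝ) (hl : l.Pairwise (fun a b => b ≤ a)) (s : ℝ) :
    ∀ m (hm : m < l.length), s < l[m] ↔ m < l.countP (fun x => decide (s < x)) := by
  induction l with
  | nil => intro m hm; simp at hm
  | cons x xs ih =>
    have hx : ∀ y ∈ xs, y ≤ x := fun y hy => (List.pairwise_cons.mp hl).1 y hy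
    have hxs : xs.Pairwise (fun a b => b ≤ a) := (List.pairwise_cons.mp hl).2
    intro m hm
    rw [List.countP_cons]
    match m with
    | 0 =>
      simp only [List.getElem_cons_zero]
      constructor
      · intro h
        have : decide (s < x) = true := by simpa using h
        simp [this]
      · intro h
        by_contra hc
        push_neg at hc
        have h1 : (decide (s < x) : Bool) = false := by simpa using hc
        have h2 : xs.countP (fun x => decide (s < x)) = 0 := by
          rw [List.countP_eq_zero]
          intro y hy
          simp only [decide_eq_true_eq]
          push_neg
          exact le_trans (hx y hy) hc
        simp [h1, h2] at h
    | m + 1 =>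
      simp only [List.getElem_cons_succ]
      have hm' : m < xs.length := by simpa using hm
      rw [ih hxs m hm']
      by_cases hsx : s < x
      · simp [hsx]
      · push_neg at hsx
        have h2 : xs.countP (fun x => decide (s < x)) = 0 := by
          rw [List.countP_eq_zero]
          intro y hy
          simp only [decide_eq_true_eq]
          push_neg
          exact le_trans (hx y hy) hsx
        have : ¬ s < xs[m] := by
          push_neg
          exact le_trans (hx _ (List.getElem_mem _)) hsx
        simp only [this, h2, false_iff, not_lt]
        split <;> omega

lemma lexB_aux : ∀ (k : ℕ) (a b : List ℝ) (hk : k < a.length) (hk' : k < b.length),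
    (∀ m (hm : m < k), a[m]'(lt_trans hm hk) ≤ b[m]'(lt_trans hm hk')) →
    a[k] < b[k] → List.Lex (· < ·) a b := by
  intro k
  induction k with
  | zero =>
    intro a b hk hk' _ hlt
    match a, b with
    | x :: xs, y :: ys =>
      simp only [List.getElem_cons_zero] at hlt
      exact List.Lex.rel hlt
  | succ k ih =>
    intro a b hk hk' hle hlt
    match a, b with
    | x :: xs, y :: ys =>
      have h0 : x ≤ y := by simpa using hle 0 (Nat.succ_pos k)
      rcases lt_or_eq_of_le h0 with h | h
      · exact List.Lex.rel h
      · subst h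
        refine List.Lex.cons
          (ih xs ys (by simpa using hk) (by simpa using hk') ?_ (by simpa using hlt))
        intro m hm
        simpa using hle (m+1) (by omega)

lemma psiLex_aux {N : Type*} [Fintype N] (a b : N → ℝ) (t : ℝ)
    (H1 : ∀ i, t < a i → a i ≤ b i) (H2 : ∃ j, a j ≤ t ∧ t < b j) :
    List.Lex (· < ·) ((Finset.univ.toList.map a).insertionSort (fun x y => y ≤ x))
      ((Finset.univ.toList.map b).insertionSort (fun x y => y ≤ x)) := by
  classical
  obtain ⟨j, haj, hbj⟩ := H2
  haveI : Std.Total (fun x y : ℝ => y ≤ x) := ⟨fun x y => le_total y x⟩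
  haveI : IsTrans ℝ (fun x y : ℝ => y ≤ x) := ⟨fun x y z h1 h2 => le_trans h2 h1⟩
  set sa := (Finset.univ.toList.map a).insertionSort (fun x y : ℝ => y ≤ x) with hsadef
  set sb := (Finset.univ.toList.map b).insertionSort (fun x y : ℝ => y ≤ x) with hsbdef
  have hsa : sa.Pairwise (fun x y : ℝ => y ≤ x) := List.pairwise_insertionSort _ _
  have hsb : sb.Pairwise (fun x y : ℝ => y ≤ x) := List.pairwise_insertionSort _ _
  have hla : sa.length = Fintype.card N := by
    rw [hsadef, List.length_insertionSort, List.length_map, Finset.length_toList,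
      Finset.card_univ]
  have hlb : sb.length = Fintype.card N := by
    rw [hsbdef, List.length_insertionSort, List.length_map, Finset.length_toList,
      Finset.card_univ]
  have hca : ∀ s : ℝ, sa.countP (fun x => decide (s < x))
      = (univ.filter (fun i => s < a i)).card := by
    intro s
    rw [hsadef, (List.perm_insertionSort _ _).countP_eq, List.countP_map]
    exact countP_toList_aux _ _
  have hcb : ∀ s : ℝ, sb.countP (fun x => decide (s < x))
      = (univ.filter (fun i => s < b i)).card := by
    intro s
    rw [hsbdef, (List.perm_insertionSort _ _).countP_eq, List.countP_map]
    exact countP_toList_aux _ _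
  have hmono : ∀ s : ℝ, t ≤ s →
      (univ.filter (fun i => s < a i)).card ≤ (univ.filter (fun i => s < b i)).card := by
    intro s hs
    apply Finset.card_le_card
    intro i hi
    rw [Finset.mem_filter] at hi ⊢
    exact ⟨hi.1, lt_of_lt_of_le hi.2 (H1 i (lt_of_le_of_lt hs hi.2))⟩
  set ka := (univ.filter (fun i => t < a i)).card with hka
  set kb := (univ.filter (fun i => t < b i)).card with hkb
  have hkakb : ka < kb := by
    apply Finset.card_lt_card
    rw [Finset.ssubset_iff_of_subset]
    · exact ⟨j, by simp [hbj], by simp [not_lt.mpr haj]⟩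
    · intro i hi
      rw [Finset.mem_filter] at hi ⊢
      exact ⟨hi.1, lt_of_lt_of_le hi.2 (H1 i hi.2)⟩
  have hkbn : kb ≤ Fintype.card N := by
    rw [hkb, ← Finset.card_univ]; exact Finset.card_le_card (Finset.filter_subset _ _)
  have hkn : ka < Fintype.card N := lt_of_lt_of_le hkakb hkbn
  have hk : ka < sa.length := by rw [hla]; exact hkn
  have hk' : ka < sb.length := by rw [hlb]; exact hkn
  apply lexB_aux ka sa sb hk hk'
  · intro m hm
    by_contra hcon
    push_neg at hcon
    have ham : t < sa[m]'(lt_trans hm hk) := by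
      rw [countA_aux sa hsa t m (lt_trans hm hk), hca t]
      exact hm
    set s : ℝ := max t (sb[m]'(lt_trans hm hk')) with hs
    have hts : t ≤ s := le_max_left _ _
    have hsam : s < sa[m]'(lt_trans hm hk) := max_lt ham hcon
    have h1 : m < (univ.filter (fun i => s < a i)).card := by
      rw [← hca s, ← countA_aux sa hsa s m (lt_trans hm hk)]
      exact hsam
    have h2 : (univ.filter (fun i => s < b i)).card ≤ m := by
      by_contra h
      push_neg at h
      have := (countA_aux sb hsb s m (lt_trans hm hk')).mpr (by rw [hcb s]; exact h)
      exact absurd this (not_lt.mpr (le_max_right _ _))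
    have := hmono s hts
    omega
  · have h1 : ¬ t < sa[ka] := by
      rw [countA_aux sa hsa t ka hk, hca t]
      omega
    have h2 : t < sb[ka] := by
      rw [countA_aux sb hsb t ka hk', hcb t]
      omega
    exact lt_of_le_of_lt (not_lt.mp h1) h2

/-- every monotone submodular HGCRP instance admits a feasible partition
that is simultaneously Nash stable, core stable and Pareto optimal; specifically, any
feasible partition maximizing the lexicographic potential `ψ` has all three properties. -/
theorem exists_NS_CS_PO {N : Type*} [DecidableEq N] [Fintype N]
    (U : Finset N → ℝ) (κ : ℕ) (hκ : 1 ≤ κ)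
    (hmono : ∀ X Y : Finset N, X ⊆ Y → U X ≤ U Y)
    (hsub : ∀ (X Y : Finset N) (x : N), X ⊆ Y → x ∉ Y →
      U (insert x Y) - U Y ≤ U (insert x X) - U X)
    (hempty : U ∅ = 0) :
    (∀ P : N → Finset N, Feasible κ P →
        (∀ P' : N → Finset N, Feasible κ P' → ¬ List.Lex (· < ·) (psi U P) (psi U P')) →
        NashStable U κ P ∧ CoreStable U κ P ∧ ParetoOptimal U κ P) ∧
    ∃ P : N → Finset N, Feasible κ P ∧
      NashStable U κ P ∧ CoreStable U κ P ∧ ParetoOptimal U κ P := by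
  classical
  have key : ∀ P : N → Finset N, Feasible κ P →
      (∀ P' : N → Finset N, Feasible κ P' → ¬ List.Lex (· < ·) (psi U P) (psi U P')) →
      NashStable U κ P ∧ CoreStable U κ P ∧ ParetoOptimal U κ P := by
    intro P hF hmax
    obtain ⟨⟨hmem, hpart⟩, hcard⟩ := hF
    have contra : ∀ (P' : N → Finset N), Feasible κ P' → ∀ t : ℝ,
        (∀ i, t < U (P i) → U (P i) ≤ U (P' i)) →
        (∃ j, U (P j) ≤ t ∧ t < U (P' j)) → False := by
      intro P' hF' t H1 H2
      exact hmax P' hF'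
        (psiLex_aux (fun i => U (P i)) (fun i => U (P' i)) t H1 H2)
    refine ⟨⟨?_, ?_⟩, ?_, ?_⟩
    · -- Nash: singleton deviation
      intro i
      by_contra hc
      push_neg at hc
      set P' : N → Finset N := fun k => if k = i then {i} else (P k).erase i with hP'
      have hF' : Feasible κ P' := by
        refine ⟨⟨?_, ?_⟩, ?_⟩
        · intro k
          by_cases hk : k = i
          · subst hk; simp [hP']
          · simp only [hP', if_neg hk]
            exact Finset.mem_erase.mpr ⟨hk, hmem k⟩
        · intro k j' hj'
          by_cases hk : k = i
          · subst hk
            simp only [hP', if_pos rfl, Finset.mem_singleton] at hj'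
            subst hj'
            simp [hP']
          · simp only [hP', if_neg hk] at hj'
            obtain ⟨hji, hjk⟩ := Finset.mem_erase.mp hj'
            have : P j' = P k := hpart k j' hjk
            simp only [hP', if_neg hji, if_neg hk, this]
        · intro k
          by_cases hk : k = i
          · subst hk; simp only [hP', if_pos rfl, Finset.card_singleton]; exact hκ
          · simp only [hP', if_neg hk]
            exact le_trans (Finset.card_le_card (Finset.erase_subset _ _)) (hcard k)
      refine contra P' hF' (U (P i)) ?_ ⟨i, le_refl _, by simpa [hP'] using hc⟩
      intro k hk
      have hki : k ≠ i := by
        intro h; subst h; exact lt_irrefl _ hk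
      simp only [hP', if_neg hki]
      by_cases hik : i ∈ P k
      · have : P i = P k := hpart k i hik
        rw [this] at hk
        exact absurd hk (lt_irrefl _)
      · rw [Finset.erase_eq_of_notMem hik]
    · -- Nash: moving to existing coalition
      intro i C hCj hCne hClt
      by_contra hc
      push_neg at hc
      obtain ⟨j0, hC⟩ := hCj
      have hiC : i ∉ C := by
        intro hiC
        rw [hC] at hiC
        exact hCne (hC.trans (hpart j0 i hiC).symm ▸ (by rw [hC, ← hpart j0 i hiC]))
      set P' : N → Finset N := fun k => if P k = C ∨ k = i then insert i C else (P k).erase i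
        with hP'
      have hF' : Feasible κ P' := by
        refine ⟨⟨?_, ?_⟩, ?_⟩
        · intro k
          by_cases hk : P k = C ∨ k = i
          · simp only [hP', if_pos hk]
            rcases hk with hk | hk
            · exact Finset.mem_insert_of_mem (hk ▸ hmem k)
            · subst hk; exact Finset.mem_insert_self _ _
          · simp only [hP', if_neg hk]
            push_neg at hk
            exact Finset.mem_erase.mpr ⟨hk.2, hmem k⟩
        · intro k j' hj'
          by_cases hk : P k = C ∨ k = i
          · simp only [hP', if_pos hk] at hj' ⊢
            rcases Finset.mem_insert.mp hj' with h | h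
            · subst h; simp [hP']
            · have hPj' : P j' = C := by rw [hC] at h ⊢; exact hpart j0 j' h
              simp [hP', hPj']
          · simp only [hP', if_neg hk] at hj'
            push_neg at hk
            obtain ⟨hji, hjk⟩ := Finset.mem_erase.mp hj'
            have hPj' : P j' = P k := hpart k j' hjk
            have : ¬ (P j' = C ∨ j' = i) := by
              push_neg; exact ⟨hPj' ▸ hk.1, hji⟩
            have hcondk : ¬ (P k = C ∨ k = i) := by push_neg; exact hk
            simp only [hP', if_neg this, if_neg hcondk, hPj']
        · intro k
          by_cases hk : P k = C ∨ k = i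
          · simp only [hP', if_pos hk]
            calc (insert i C).card ≤ C.card + 1 := Finset.card_insert_le _ _
              _ ≤ κ := by omega
          · simp only [hP', if_neg hk]
            exact le_trans (Finset.card_le_card (Finset.erase_subset _ _)) (hcard k)
      have hP'i : P' i = insert i C := by simp [hP']
      refine contra P' hF' (U (P i)) ?_ ⟨i, le_refl _, by rw [hP'i]; exact hc⟩
      intro k hk
      have hki : k ≠ i := by intro h; subst h; exact lt_irrefl _ hk
      by_cases hPkC : P k = C
      · simp only [hP', if_pos (Or.inl hPkC), hPkC]
        exact hmono _ _ (Finset.subset_insert _ _)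
      · have hcond : ¬ (P k = C ∨ k = i) := by push_neg; exact ⟨hPkC, hki⟩
        simp only [hP', if_neg hcond]
        by_cases hik : i ∈ P k
        · have : P i = P k := hpart k i hik
          rw [this] at hk
          exact absurd hk (lt_irrefl _)
        · rw [Finset.erase_eq_of_notMem hik]
    · -- Core stability
      rintro ⟨C, hCne, hCcard, hCblock⟩
      set P' : N → Finset N := fun k => if k ∈ C then C else (P k) \ C with hP'
      have hF' : Feasible κ P' := by
        refine ⟨⟨?_, ?_⟩, ?_⟩
        · intro k
          by_cases hk : k ∈ C
          · simp [hP', hk]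
          · simp only [hP', if_neg hk]
            exact Finset.mem_sdiff.mpr ⟨hmem k, hk⟩
        · intro k j' hj'
          by_cases hk : k ∈ C
          · simp only [hP', if_pos hk] at hj'
            simp [hP', hj', hk]
          · simp only [hP', if_neg hk] at hj'
            obtain ⟨hjk, hjC⟩ := Finset.mem_sdiff.mp hj'
            have : P j' = P k := hpart k j' hjk
            simp only [hP', if_neg hjC, if_neg hk, this]
        · intro k
          by_cases hk : k ∈ C
          · simp only [hP', if_pos hk]; exact hCcard
          · simp only [hP', if_neg hk]
            exact le_trans (Finset.card_le_card (Finset.sdiff_subset)) (hcard k)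
      obtain ⟨i0, hi0⟩ := hCne
      set t : ℝ := C.sup' ⟨i0, hi0⟩ (fun i => U (P i)) with ht
      have htC : t < U C := by
        rw [ht]; refine (Finset.sup'_lt_iff (α := ℝ) _).2 ?_
        exact fun i hi => hCblock i hi
      refine contra P' hF' t ?_ ⟨i0, by rw [ht]; exact Finset.le_sup' (fun i => U (P i)) hi0, by simp only [hP', if_pos hi0]; exact htC⟩
      intro k hk
      have hkC : k ∉ C := by
        intro h
        exact absurd hk (not_lt.mpr (by rw [ht]; exact Finset.le_sup' (fun i => U (P i)) h))
      simp only [hP', if_neg hkC]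
      by_cases hd : Disjoint (P k) C
      · rw [Finset.sdiff_eq_self_of_disjoint hd]
      · obtain ⟨a, haPk, haC⟩ := Finset.not_disjoint_iff.mp hd
        have : P a = P k := hpart k a haPk
        have : U (P k) ≤ t := this ▸ Finset.le_sup' (fun i => U (P i)) haC
        exact absurd hk (not_lt.mpr this)
    · -- Pareto optimality
      rintro ⟨P', hF', hle, j, hj⟩
      exact contra P' hF' (U (P j)) (fun i _ => hle i) ⟨j, le_refl _, hj⟩
  refine ⟨key, ?_⟩
  have hfeas0 : Feasible κ (fun i => ({i} : Finset N)) := by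
    refine ⟨⟨fun i => Finset.mem_singleton_self i, ?_⟩, fun i => by simp [hκ]⟩
    intro i j hj
    rw [Finset.mem_singleton] at hj
    subst hj
    rfl
  set F : Finset (N → Finset N) := univ.filter (fun P => Feasible κ P) with hFdef
  obtain ⟨P, hPF, hmax⟩ := F.exists_max_image (psi U)
    ⟨_, Finset.mem_filter.mpr ⟨Finset.mem_univ _, hfeas0⟩⟩
  have hPfeas : Feasible κ P := (Finset.mem_filter.mp hPF).2
  have hPmax : ∀ P' : N → Finset N, Feasible κ P' →
      ¬ List.Lex (· < ·) (psi U P) (psi U P') := by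
    intro P' hF' hlex
    have h1 : psi U P < psi U P' := hlex
    have h2 : psi U P' ≤ psi U P :=
      hmax P' (Finset.mem_filter.mpr ⟨Finset.mem_univ _, hF'⟩)
    exact absurd h1 (not_lt.mpr h2)
  exact ⟨P, hPfeas, key P hPfeas hPmax⟩
end

section
/- In a (0,β)-HEG, imitative better response dynamics starting from a partition into ⌊|N|/κ⌋ coalitions of size exactly κ plus one leftover coalition L of size |L| < κ terminates in a Nash stable partition after at most β·|S|·⌊|N|/κ⌋·(κ−|L|) individual moves, which is O(|N|·|S|) for constant β. -/
set_option linter.unusedSectionVars false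


open Finset

/-- Joint utility in a `(0,β)`-HEG, with natural-number expertise levels. -/
def jointU {N S : Type*} [Fintype S] (e : N → S → ℕ) (C : Finset N) : ℕ :=
  ∑ s, C.sup fun i => e i s

/-- Nash stability in an HEG: no agent benefits from moving to an existing coalition
of size `< κ`. -/
def NashStableHEG {N S : Type*} [DecidableEq N] [Fintype S] (e : N → S → ℕ) (κ : ℕ)
    (P : N → Finset N) : Prop :=
  ∀ i C, (∃ j, C = P j) → i ∉ C → C.card < κ →
    jointU e (insert i C) ≤ jointU e (P i)

section Aux
variable {N S : Type*} [DecidableEq N] [Fintype S]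

lemma jointU_mono' (e : N → S → ℕ) {C D : Finset N} (h : C ⊆ D) : jointU e C ≤ jointU e D :=
  Finset.sum_le_sum fun _ _ => Finset.sup_mono h

lemma jointU_le' (e : N → S → ℕ) {β : ℕ} (hβ : ∀ i s, e i s ≤ β) (C : Finset N) :
    jointU e C ≤ Fintype.card S * β := by
  calc jointU e C ≤ ∑ _s : S, β :=
        Finset.sum_le_sum fun s _ => Finset.sup_le fun i _ => hβ i s
    _ = Fintype.card S * β := by rw [Finset.sum_const, card_univ, smul_eq_mul]

lemma part_eq' {P : N → Finset N} (hP : IsPartitionMap P) {i j : N} (h : i ∈ P j) : P i = P j :=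
  hP.2 j i h

lemma part_disj' {P : N → Finset N} (hP : IsPartitionMap P) {i j : N} (h : P i ≠ P j) :
    Disjoint (P i) (P j) := by
  rw [Finset.disjoint_left]
  intro a hai haj
  exact h ((part_eq' hP hai).symm.trans (part_eq' hP haj))

def psiHEG [Fintype N] (e : N → S → ℕ) (κ : ℕ) (P : N → Finset N) : ℕ :=
  ∑ i, if (P i).card = κ then jointU e (P i) else 0

lemma psi_le' [Fintype N] (e : N → S → ℕ) {β : ℕ} (κ : ℕ) (hβ : ∀ i s, e i s ≤ β)
    (P : N → Finset N) :
    psiHEG e κ P ≤ (univ.filter fun i => (P i).card = κ).card * (Fintype.card S * β) := by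
  unfold psiHEG
  rw [← Finset.sum_filter]
  calc ∑ i ∈ univ.filter fun i => (P i).card = κ, jointU e (P i)
      ≤ (univ.filter fun i => (P i).card = κ).card • (Fintype.card S * β) :=
        Finset.sum_le_card_nsmul _ _ _ fun i _ => jointU_le' e hβ (P i)
    _ = _ := smul_eq_mul _ _

lemma full_filter_eq [Fintype N] (P : N → Finset N) (hP : IsPartitionMap P) (κ : ℕ) :
    ∃ k, (univ.filter fun i => (P i).card = κ).card = κ * k := by
  classical
  set A := univ.filter fun i => (P i).card = κ with hA
  have hAmem : ∀ i, i ∈ A ↔ (P i).card = κ := by simp [hA]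
  set FP := A.image P with hFP
  have hbi : A = FP.biUnion id := by
    ext j
    simp only [mem_biUnion, id]
    constructor
    · intro hj; exact ⟨P j, mem_image_of_mem P hj, hP.1 j⟩
    · rintro ⟨C, hC, hjC⟩
      obtain ⟨i, hi, rfl⟩ := mem_image.1 hC
      rw [hAmem] at hi ⊢
      rw [part_eq' hP hjC]; exact hi
  have hdisj : ∀ x ∈ FP, ∀ y ∈ FP, x ≠ y → Disjoint (id x) (id y) := by
    intro x hx y hy hxy
    obtain ⟨i, _, rfl⟩ := mem_image.1 hx
    obtain ⟨j, _, rfl⟩ := mem_image.1 hy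
    exact part_disj' hP hxy
  refine ⟨FP.card, ?_⟩
  rw [hbi, Finset.card_biUnion hdisj]
  have hc : ∀ C ∈ FP, (id C).card = κ := by
    intro C hC; obtain ⟨i, hi, rfl⟩ := mem_image.1 hC; exact (hAmem i).1 hi
  rw [Finset.sum_congr rfl hc, Finset.sum_const, smul_eq_mul, mul_comm]

lemma full_filter_le [Fintype N] (P : N → Finset N) (hP : IsPartitionMap P) {κ : ℕ}
    (hκ : 0 < κ) :
    (univ.filter fun i => (P i).card = κ).card ≤ κ * (Fintype.card N / κ) := by
  obtain ⟨k, hk⟩ := full_filter_eq P hP κ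
  have h1 : κ * k ≤ Fintype.card N := by
    rw [← hk]
    calc (univ.filter fun i => (P i).card = κ).card ≤ univ.card := card_filter_le _ _
      _ = Fintype.card N := card_univ
  have h2 : k ≤ Fintype.card N / κ := (Nat.le_div_iff_mul_le hκ).2 (by rw [mul_comm]; exact h1)
  rw [hk]; exact Nat.mul_le_mul_left κ h2

lemma full_filter_add_le [Fintype N] (P : N → Finset N) (hP : IsPartitionMap P) {κ : ℕ}
    (hκ : 0 < κ) (B : Finset N) (hB : ∀ i ∈ B, (P i).card ≠ κ) (hBc : κ ≤ B.card) :
    (univ.filter fun i => (P i).card = κ).card + κ ≤ κ * (Fintype.card N / κ) := by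
  obtain ⟨k, hk⟩ := full_filter_eq P hP κ
  have hdisj : Disjoint (univ.filter fun i => (P i).card = κ) B := by
    rw [disjoint_left]; intro a ha hab; exact hB a hab (mem_filter.1 ha).2
  have h1 : (univ.filter fun i => (P i).card = κ).card + B.card ≤ Fintype.card N := by
    rw [← card_union_of_disjoint hdisj]
    calc _ ≤ (univ : Finset N).card := card_le_card (subset_univ _)
      _ = Fintype.card N := card_univ
  have h2 : (k + 1) * κ ≤ Fintype.card N := by
    have : κ * k + κ ≤ Fintype.card N := by omega
    linarith [this]
  have h3 : k + 1 ≤ Fintype.card N / κ := (Nat.le_div_iff_mul_le hκ).2 h2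
  calc (univ.filter fun i => (P i).card = κ).card + κ = κ * (k + 1) := by rw [hk]; ring
    _ ≤ κ * (Fintype.card N / κ) := Nat.mul_le_mul_left κ h3

end Aux
open Finset

section Step
variable {N S : Type*} [DecidableEq N] [Fintype S] [Fintype N]

lemma psi_step (e : N → S → ℕ) (κ : ℕ)
    (P P' : N → Finset N) (hP : IsPartitionMap P)
    (m j₀ : N) (Dst : Finset N) (hD : P j₀ = Dst) (hm : m ∉ Dst) (hDlt : Dst.card < κ)
    (hPmle : (P m).card ≤ κ)
    (hP' : ∀ a, P' a = if a ∈ insert m Dst then insert m Dst else (P a).erase m) :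
    psiHEG e κ P' + (if (P m).card = κ then κ * jointU e (P m) else 0)
      = psiHEG e κ P + (if (insert m Dst).card = κ then κ * jointU e (insert m Dst) else 0) := by
  classical
  set E := insert m Dst with hE
  have hmPm : m ∈ P m := hP.1 m
  have hPmDst : P m ≠ Dst := fun h => hm (h ▸ hmPm)
  have hdisj : Disjoint (P m) Dst := by
    have := part_disj' hP (i := m) (j := j₀) (by rw [hD]; exact hPmDst)
    rwa [hD] at this
  have hmemDst : ∀ i ∈ Dst, P i = Dst := by
    intro i hi
    rw [part_eq' hP (show i ∈ P j₀ by rw [hD]; exact hi), hD]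
  set A := Dst ∪ P m with hA
  have hAE : E ∪ (P m).erase m = A := by
    ext x
    by_cases hxm : x = m <;>
      simp [hE, hA, hxm, hmPm, Finset.mem_union, Finset.mem_insert, Finset.mem_erase]
  have key1 : (∑ i ∈ A, if (P i).card = κ then jointU e (P i) else 0)
      = (if (P m).card = κ then κ * jointU e (P m) else 0) := by
    rw [hA, Finset.sum_union hdisj.symm]
    have h1 : (∑ i ∈ Dst, if (P i).card = κ then jointU e (P i) else 0) = 0 :=
      Finset.sum_eq_zero fun i hi => by rw [hmemDst i hi, if_neg (Nat.ne_of_lt hDlt)]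
    have h2 : (∑ i ∈ P m, if (P i).card = κ then jointU e (P i) else 0)
        = (P m).card * (if (P m).card = κ then jointU e (P m) else 0) := by
      rw [Finset.sum_congr rfl fun i hi => by rw [part_eq' hP hi], Finset.sum_const, smul_eq_mul]
    rw [h1, h2, zero_add]
    by_cases hf : (P m).card = κ
    · rw [if_pos hf, if_pos hf, hf]
    · rw [if_neg hf, if_neg hf, mul_zero]
  have hdisjE : Disjoint E ((P m).erase m) := by
    rw [Finset.disjoint_left]
    intro x hx hx'
    rcases Finset.mem_insert.1 hx with hxm | hxD
    · rw [hxm] at hx'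
      exact Finset.notMem_erase m (P m) hx'
    · exact Finset.disjoint_left.1 hdisj (Finset.mem_of_mem_erase hx') hxD
  have key2 : (∑ i ∈ A, if (P' i).card = κ then jointU e (P' i) else 0)
      = (if E.card = κ then κ * jointU e E else 0) := by
    rw [← hAE, Finset.sum_union hdisjE]
    have hPE : ∀ i ∈ E, P' i = E := fun i hi => by rw [hP' i]; exact if_pos hi
    have h1 : (∑ i ∈ E, if (P' i).card = κ then jointU e (P' i) else 0)
        = E.card * (if E.card = κ then jointU e E else 0) := by
      rw [Finset.sum_congr rfl fun i hi => by rw [hPE i hi], Finset.sum_const, smul_eq_mul]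
    have hPerase : ∀ i ∈ (P m).erase m, P' i = (P m).erase m := by
      intro i hi
      have him : i ∈ P m := Finset.mem_of_mem_erase hi
      have hiE : i ∉ E := fun h => Finset.disjoint_left.1 hdisjE h hi
      rw [hP' i, if_neg hiE, part_eq' hP him]
    have h2 : (∑ i ∈ (P m).erase m, if (P' i).card = κ then jointU e (P' i) else 0) = 0 := by
      refine Finset.sum_eq_zero fun i hi => ?_
      rw [hPerase i hi, if_neg]
      have h3 : 0 < (P m).card := Finset.card_pos.2 ⟨m, hmPm⟩
      rw [Finset.card_erase_of_mem hmPm]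
      omega
    rw [h1, h2, add_zero]
    by_cases hf : E.card = κ
    · rw [if_pos hf, if_pos hf, hf]
    · rw [if_neg hf, if_neg hf, mul_zero]
  have hout : ∀ i ∈ Aᶜ, P' i = P i := by
    intro i hi
    rw [Finset.mem_compl, hA, Finset.mem_union] at hi
    push_neg at hi
    have hiE : i ∉ E := by
      rw [hE, Finset.mem_insert]
      push_neg
      exact ⟨fun h => hi.2 (h ▸ hmPm), hi.1⟩
    rw [hP' i, if_neg hiE, Finset.erase_eq_of_notMem]
    intro hmi
    have h4 : P m = P i := part_eq' hP hmi
    exact hi.2 (by rw [h4]; exact hP.1 i)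
  have e1 := Finset.sum_add_sum_compl A (fun i => if (P i).card = κ then jointU e (P i) else 0)
  have e2 := Finset.sum_add_sum_compl A (fun i => if (P' i).card = κ then jointU e (P' i) else 0)
  have e3 : (∑ i ∈ Aᶜ, if (P' i).card = κ then jointU e (P' i) else 0)
      = ∑ i ∈ Aᶜ, if (P i).card = κ then jointU e (P i) else 0 :=
    Finset.sum_congr rfl fun i hi => by rw [hout i hi]
  unfold psiHEG
  rw [← e2, ← e1, key1, key2, e3]
  ring

end Step

/-- in a `(0,β)`-HEG, imitative better response dynamics starting from a
partition into `⌊|N|/κ⌋` coalitions of size exactly `κ` plus one leftover coalition `L`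
with `|L| < κ` makes at most `β·|S|·⌊|N|/κ⌋·(κ−|L|)` individual moves, and when it
terminates (no better response is available) the resulting partition is Nash stable. -/
theorem imitative_better_response_terminates
    {N S : Type*} [DecidableEq N] [Fintype N] [Fintype S]
    (e : N → S → ℕ) (β κ : ℕ) (hβ : ∀ i s, e i s ≤ β) (hκ : 0 < κ)
    (L : Finset N) (hL : L.card < κ)
    (T : ℕ) (f : ℕ → N → Finset N) (mover : ℕ → N) (dest : ℕ → Finset N)
    -- initial almost-full shape: every coalition has size exactly `κ`, except `L`
    (hinit : ∀ i, (f 0 i).card = κ ∨ f 0 i = L)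
    (hpart : ∀ t, t ≤ T → IsPartitionMap (f t))
    -- each move is a better response to an existing, non-full coalition
    (hdest : ∀ t, t < T → ∃ j, dest t = f t j)
    (hnotmem : ∀ t, t < T → mover t ∉ dest t)
    (hroom : ∀ t, t < T → (dest t).card < κ)
    (hbetter : ∀ t, t < T →
      jointU e (f t (mover t)) < jointU e (insert (mover t) (dest t)))
    (hstep : ∀ t, t < T → f (t + 1) = fun a =>
      if a ∈ insert (mover t) (dest t) then insert (mover t) (dest t)
      else (f t a).erase (mover t))
    -- imitative rule: while the last destination is still not full, an agent from the
    -- last mover's previous coalition imitates the last move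
    (himit : ∀ t, t + 1 < T → (insert (mover t) (dest t)).card < κ →
      mover (t + 1) ∈ (f t (mover t)).erase (mover t) ∧
      dest (t + 1) = insert (mover t) (dest t))
    -- the dynamics has terminated: no better response is available at time `T`
    (hmax : ¬ ∃ i C, (∃ j, C = f T j) ∧ i ∉ C ∧ C.card < κ ∧
      jointU e (f T i) < jointU e (insert i C)) :
    T ≤ β * Fintype.card S * (Fintype.card N / κ) * (κ - L.card) ∧
    NashStableHEG e κ (f T) := by
  classical
  have main : ∀ t, t ≤ T → ∃ q r, t = q * (κ - L.card) + r ∧ r < κ - L.card ∧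
      ((r = 0 ∧ ∃ D : Finset N, D.card = L.card ∧ (∀ i, (f t i).card = κ ∨ f t i = D) ∧
          q * κ ≤ psiHEG e κ (f t)) ∨
       (0 < r ∧ 0 < t ∧ ∃ C' D' : Finset N, C' ≠ D' ∧ C'.card = κ - r ∧
          D'.card = L.card + r ∧
          (∃ j, f t j = C') ∧ (∃ j, f t j = D') ∧
          (∀ i, (f t i).card = κ ∨ f t i = C' ∨ f t i = D') ∧
          D' = insert (mover (t - 1)) (dest (t - 1)) ∧
          C' = (f (t - 1) (mover (t - 1))).erase (mover (t - 1)) ∧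
          (q + 1) * κ ≤ psiHEG e κ (f t) + κ * jointU e D')) := by
    intro t
    induction t with
    | zero =>
      intro _
      exact ⟨0, 0, by simp, by omega, Or.inl ⟨rfl, L, rfl, hinit, by simp⟩⟩
    | succ t ih =>
      intro ht1
      have htT : t < T := ht1
      have ht : t ≤ T := le_of_lt htT
      obtain ⟨q, r, hqr, hrd, hc⟩ := ih ht
      have hPt : IsPartitionMap (f t) := hpart t ht
      have hP'a : ∀ a, f (t + 1) a =
          if a ∈ insert (mover t) (dest t) then insert (mover t) (dest t)
          else (f t a).erase (mover t) := fun a => by rw [hstep t htT]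
      have hmD : mover t ∉ dest t := hnotmem t htT
      have hfmne : f t (mover t) ≠ dest t := fun h => hmD (h ▸ hPt.1 (mover t))
      have hdisjmD : Disjoint (f t (mover t)) (dest t) := by
        obtain ⟨j₀, hj₀⟩ := hdest t htT
        rw [hj₀] at hfmne ⊢
        exact part_disj' hPt hfmne
      have hreg1 : ∀ i ∈ insert (mover t) (dest t),
          f (t + 1) i = insert (mover t) (dest t) := fun i hi => by
        rw [hP'a i, if_pos hi]
      have hreg2 : ∀ i ∈ (f t (mover t)).erase (mover t),
          f (t + 1) i = (f t (mover t)).erase (mover t) := by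
        intro i hi
        obtain ⟨hine, him⟩ := Finset.mem_erase.1 hi
        have hiE : i ∉ insert (mover t) (dest t) := by
          rw [Finset.mem_insert]
          push_neg
          exact ⟨hine, fun hD => Finset.disjoint_left.1 hdisjmD him hD⟩
        rw [hP'a i, if_neg hiE, part_eq' hPt him]
      have hreg3 : ∀ i, i ∉ insert (mover t) (dest t) → i ∉ f t (mover t) →
          f (t + 1) i = f t i := by
        intro i h1 h2
        rw [hP'a i, if_neg h1, Finset.erase_eq_of_notMem]
        intro hmi
        have h3 : f t (mover t) = f t i := part_eq' hPt hmi
        exact h2 (by rw [h3]; exact hPt.1 i)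
      have hcardE : (insert (mover t) (dest t)).card = (dest t).card + 1 :=
        Finset.card_insert_of_notMem hmD
      have hbet := hbetter t htT
      rcases hc with ⟨hr0, D, hDcard, hshape, hpot⟩ |
        ⟨hrpos, htpos, C', D', hne, hCcard, hDcard, ⟨j₁, hj₁⟩, ⟨j₂, hj₂⟩, hshape,
          hD'eq, hC'eq, hpot⟩
      · -- boundary case
        subst hr0
        obtain ⟨j₀, hj₀⟩ := hdest t htT
        have hDstD : dest t = D := by
          rcases hshape j₀ with h | h
          · exfalso; have h2 := hroom t htT; rw [hj₀] at h2; omega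
          · rw [hj₀, h]
        have hfm : (f t (mover t)).card = κ := by
          rcases hshape (mover t) with h | h
          · exact h
          · exfalso; exact hmD (by rw [hDstD, ← h]; exact hPt.1 (mover t))
        have hpsi := psi_step e κ (f t) (f (t + 1)) hPt (mover t) j₀ (dest t) hj₀.symm hmD
          (hroom t htT) (le_of_eq hfm) hP'a
        rw [if_pos hfm] at hpsi
        have hEcard : (insert (mover t) (dest t)).card = L.card + 1 := by
          rw [hcardE, hDstD, hDcard]
        by_cases hd1 : L.card + 1 = κ
        · -- phase of length one completes
          rw [if_pos (hEcard.trans hd1)] at hpsi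
          have hb : κ * jointU e (f t (mover t)) + κ ≤
              κ * jointU e (insert (mover t) (dest t)) := by
            have h := Nat.mul_le_mul_left κ (Nat.succ_le_of_lt hbet)
            rw [Nat.mul_succ] at h
            omega
          refine ⟨q + 1, 0, ?_, by omega, Or.inl ⟨rfl, (f t (mover t)).erase (mover t),
            ?_, ?_, ?_⟩⟩
          · have hdd : κ - L.card = 1 := by omega
            rw [hdd] at hqr ⊢
            omega
          · rw [Finset.card_erase_of_mem (hPt.1 (mover t)), hfm]; omega
          · intro i
            by_cases h1 : i ∈ insert (mover t) (dest t)
            · left; rw [hreg1 i h1, hEcard]; omega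
            · by_cases h2 : i ∈ f t (mover t)
              · have hne' : i ≠ mover t := fun h => h1 (by rw [h]; exact Finset.mem_insert_self _ _)
                right; exact hreg2 i (Finset.mem_erase.2 ⟨hne', h2⟩)
              · left
                rw [hreg3 i h1 h2]
                rcases hshape i with h | h
                · exact h
                · exfalso
                  exact h1 (Finset.mem_insert_of_mem (by rw [hDstD, ← h]; exact hPt.1 i))
          · have hq : (q + 1) * κ = q * κ + κ := by ring
            omega
        · -- phase starts, enters mid-phase with r = 1
          have hEne : (insert (mover t) (dest t)).card ≠ κ := by rw [hEcard]; exact hd1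
          rw [if_neg hEne, add_zero] at hpsi
          have hb : κ * jointU e (f t (mover t)) + κ ≤
              κ * jointU e (insert (mover t) (dest t)) := by
            have h := Nat.mul_le_mul_left κ (Nat.succ_le_of_lt hbet)
            rw [Nat.mul_succ] at h
            omega
          refine ⟨q, 1, by omega, by omega,
            Or.inr ⟨by omega, by omega, (f t (mover t)).erase (mover t),
              insert (mover t) (dest t), ?_, ?_, ?_, ?_, ?_, ?_, ?_, ?_, ?_⟩⟩
          · intro h
            have h2 : mover t ∈ insert (mover t) (dest t) := Finset.mem_insert_self _ _
            rw [← h] at h2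
            exact Finset.notMem_erase _ _ h2
          · rw [Finset.card_erase_of_mem (hPt.1 (mover t)), hfm]
          · rw [hEcard]
          · have hpos : 0 < ((f t (mover t)).erase (mover t)).card := by
              rw [Finset.card_erase_of_mem (hPt.1 (mover t)), hfm]; omega
            obtain ⟨j, hj⟩ := Finset.card_pos.1 hpos
            exact ⟨j, hreg2 j hj⟩
          · exact ⟨mover t, hreg1 _ (Finset.mem_insert_self _ _)⟩
          · intro i
            by_cases h1 : i ∈ insert (mover t) (dest t)
            · right; right; exact hreg1 i h1
            · by_cases h2 : i ∈ f t (mover t)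
              · have hne' : i ≠ mover t := fun h => h1 (by rw [h]; exact Finset.mem_insert_self _ _)
                right; left; exact hreg2 i (Finset.mem_erase.2 ⟨hne', h2⟩)
              · left
                rw [hreg3 i h1 h2]
                rcases hshape i with h | h
                · exact h
                · exfalso
                  exact h1 (Finset.mem_insert_of_mem (by rw [hDstD, ← h]; exact hPt.1 i))
          · simp
          · simp
          · have hq : (q + 1) * κ = q * κ + κ := by ring
            omega
      · -- mid-phase case
        have ht1e : t - 1 + 1 = t := by omega
        have himitt := himit (t - 1)
        rw [ht1e] at himitt
        have hins_card : (insert (mover (t - 1)) (dest (t - 1))).card < κ := by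
          rw [← hD'eq]; omega
        obtain ⟨hmemC', hdesteq⟩ := himitt htT hins_card
        rw [← hC'eq] at hmemC'
        rw [← hD'eq] at hdesteq
        have hfm : f t (mover t) = C' := by
          rw [← hj₁]
          exact part_eq' hPt (by rw [hj₁]; exact hmemC')
        have hfmcard : (f t (mover t)).card = κ - r := by rw [hfm, hCcard]
        have hpsi := psi_step e κ (f t) (f (t + 1)) hPt (mover t) j₂ (dest t)
          (by rw [hj₂, hdesteq]) hmD (hroom t htT) (by omega) hP'a
        rw [if_neg (show ¬(f t (mover t)).card = κ by omega), add_zero] at hpsi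
        have hEcard : (insert (mover t) (dest t)).card = L.card + r + 1 := by
          rw [hcardE, hdesteq, hDcard]
        have hC''eq : C'.erase (mover t) = (f t (mover t)).erase (mover t) := by rw [hfm]
        have hDsub : D' ⊆ insert (mover t) (dest t) := by
          rw [hdesteq]; exact Finset.subset_insert _ _
        have hmul : κ * jointU e D' ≤ κ * jointU e (insert (mover t) (dest t)) :=
          Nat.mul_le_mul_left κ (jointU_mono' e hDsub)
        by_cases hfull : L.card + r + 1 = κ
        · -- phase completes
          rw [if_pos (hEcard.trans hfull)] at hpsi
          refine ⟨q + 1, 0, ?_, by omega, Or.inl ⟨rfl, C'.erase (mover t), ?_, ?_, ?_⟩⟩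
          · have hr1 : r + 1 = κ - L.card := by omega
            have hq : (q + 1) * (κ - L.card) = q * (κ - L.card) + (κ - L.card) := by ring
            omega
          · rw [Finset.card_erase_of_mem hmemC', hCcard]; omega
          · intro i
            by_cases h1 : i ∈ insert (mover t) (dest t)
            · left; rw [hreg1 i h1, hEcard]; omega
            · by_cases h2 : i ∈ f t (mover t)
              · have hne' : i ≠ mover t := fun h => h1 (by rw [h]; exact Finset.mem_insert_self _ _)
                right
                rw [hreg2 i (Finset.mem_erase.2 ⟨hne', h2⟩), hC''eq]
              · left
                rw [hreg3 i h1 h2]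
                rcases hshape i with h | h | h
                · exact h
                · exfalso; exact h2 (by rw [hfm, ← h]; exact hPt.1 i)
                · exfalso
                  refine h1 (Finset.mem_insert_of_mem ?_)
                  rw [hdesteq, ← h]; exact hPt.1 i
          · have hq : (q + 1) * κ = q * κ + κ := by ring
            omega
        · -- phase continues
          have hEne : (insert (mover t) (dest t)).card ≠ κ := by rw [hEcard]; exact hfull
          rw [if_neg hEne, add_zero] at hpsi
          refine ⟨q, r + 1, by omega, by omega,
            Or.inr ⟨by omega, by omega, C'.erase (mover t), insert (mover t) (dest t),
              ?_, ?_, ?_, ?_, ?_, ?_, ?_, ?_, ?_⟩⟩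
          · intro h
            have h2 : mover t ∈ insert (mover t) (dest t) := Finset.mem_insert_self _ _
            rw [← h] at h2
            exact Finset.notMem_erase _ _ h2
          · rw [Finset.card_erase_of_mem hmemC', hCcard]; omega
          · omega
          · have hpos : 0 < (C'.erase (mover t)).card := by
              rw [Finset.card_erase_of_mem hmemC', hCcard]; omega
            obtain ⟨j, hj⟩ := Finset.card_pos.1 hpos
            refine ⟨j, ?_⟩
            rw [hC''eq] at hj ⊢
            exact hreg2 j hj
          · exact ⟨mover t, hreg1 _ (Finset.mem_insert_self _ _)⟩
          · intro i
            by_cases h1 : i ∈ insert (mover t) (dest t)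
            · right; right; exact hreg1 i h1
            · by_cases h2 : i ∈ f t (mover t)
              · have hne' : i ≠ mover t := fun h => h1 (by rw [h]; exact Finset.mem_insert_self _ _)
                right; left
                rw [hreg2 i (Finset.mem_erase.2 ⟨hne', h2⟩), hC''eq]
              · left
                rw [hreg3 i h1 h2]
                rcases hshape i with h | h | h
                · exact h
                · exfalso; exact h2 (by rw [hfm, ← h]; exact hPt.1 i)
                · exfalso
                  refine h1 (Finset.mem_insert_of_mem ?_)
                  rw [hdesteq, ← h]; exact hPt.1 i
          · simp
          · simp [hC''eq]
          · omega
  constructor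
  · -- the move bound
    obtain ⟨q, r, hqr, hrd, hc⟩ := main T le_rfl
    have hPT : IsPartitionMap (f T) := hpart T le_rfl
    have hAle := psi_le' e κ hβ (f T)
    rcases hc with ⟨hr0, D, hDcard, hshape, hpot⟩ |
      ⟨hrpos, htpos, C', D', hne, hCcard, hDcard, ⟨j₁, hj₁⟩, ⟨j₂, hj₂⟩, hshape, _, _, hpot⟩
    · have h2 := full_filter_le (f T) hPT hκ
      have h3 : q * κ ≤ κ * ((Fintype.card N / κ) * (Fintype.card S * β)) := by
        calc q * κ ≤ psiHEG e κ (f T) := hpot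
          _ ≤ (univ.filter fun i => (f T i).card = κ).card * (Fintype.card S * β) := hAle
          _ ≤ (κ * (Fintype.card N / κ)) * (Fintype.card S * β) :=
            Nat.mul_le_mul_right _ h2
          _ = κ * ((Fintype.card N / κ) * (Fintype.card S * β)) := by ring
      have h4 : q ≤ (Fintype.card N / κ) * (Fintype.card S * β) := by
        refine Nat.le_of_mul_le_mul_left ?_ hκ
        calc κ * q = q * κ := by ring
          _ ≤ _ := h3
      have h5 : q * (κ - L.card) ≤
          ((Fintype.card N / κ) * (Fintype.card S * β)) * (κ - L.card) :=
        Nat.mul_le_mul_right _ h4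
      have h6 : ((Fintype.card N / κ) * (Fintype.card S * β)) * (κ - L.card) =
          β * Fintype.card S * (Fintype.card N / κ) * (κ - L.card) := by ring
      omega
    · have hdisjC'D' : Disjoint C' D' := by
        rw [← hj₁, ← hj₂]
        exact part_disj' hPT (by rw [hj₁, hj₂]; exact hne)
      have hB : ∀ i ∈ C' ∪ D', (f T i).card ≠ κ := by
        intro i hi
        rcases Finset.mem_union.1 hi with h | h
        · rw [part_eq' hPT (show i ∈ f T j₁ by rw [hj₁]; exact h), hj₁, hCcard]
          omega
        · rw [part_eq' hPT (show i ∈ f T j₂ by rw [hj₂]; exact h), hj₂, hDcard]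
          omega
      have hBc : κ ≤ (C' ∪ D').card := by
        rw [card_union_of_disjoint hdisjC'D', hCcard, hDcard]
        omega
      have h2 := full_filter_add_le (f T) hPT hκ (C' ∪ D') hB hBc
      have hu : κ * jointU e D' ≤ κ * (Fintype.card S * β) :=
        Nat.mul_le_mul_left κ (jointU_le' e hβ D')
      have h3 : (q + 1) * κ ≤ κ * ((Fintype.card N / κ) * (Fintype.card S * β)) := by
        calc (q + 1) * κ ≤ psiHEG e κ (f T) + κ * jointU e D' := hpot
          _ ≤ (univ.filter fun i => (f T i).card = κ).card * (Fintype.card S * β)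
              + κ * (Fintype.card S * β) := Nat.add_le_add hAle hu
          _ = ((univ.filter fun i => (f T i).card = κ).card + κ) * (Fintype.card S * β) := by
            ring
          _ ≤ (κ * (Fintype.card N / κ)) * (Fintype.card S * β) :=
            Nat.mul_le_mul_right _ h2
          _ = κ * ((Fintype.card N / κ) * (Fintype.card S * β)) := by ring
      have h4 : q + 1 ≤ (Fintype.card N / κ) * (Fintype.card S * β) := by
        refine Nat.le_of_mul_le_mul_left ?_ hκ
        calc κ * (q + 1) = (q + 1) * κ := by ring
          _ ≤ _ := h3
      have h5 : (q + 1) * (κ - L.card) ≤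
          ((Fintype.card N / κ) * (Fintype.card S * β)) * (κ - L.card) :=
        Nat.mul_le_mul_right _ h4
      have h6 : ((Fintype.card N / κ) * (Fintype.card S * β)) * (κ - L.card) =
          β * Fintype.card S * (Fintype.card N / κ) * (κ - L.card) := by ring
      have h7 : (q + 1) * (κ - L.card) = q * (κ - L.card) + (κ - L.card) := by ring
      omega
  · -- Nash stability
    intro i C h1 h2 h3
    by_contra h4
    exact hmax ⟨i, C, h1, h2, h3, lt_of_not_ge h4⟩
end
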